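/- arXiv:1511.03967 — 2 statements merged into one kernel-verified Lean document; each statement's English description precedes it below -/
import Mathlib

section
/- Let (a_n) be a sequence of positive real numbers such that the series ∑_{n=1}^∞ a_n^t converges for every t > t* and diverges at t = t*. Then there exists a sequence (ε_n) of positive real numbers with ε_n → 0 such that ∑_{n=1}^∞ a_n^{t* + ε_n} < ∞. -/
open Filter Topology Finset

theorem stmt_2 (a : ℕ → ℝ) (ha : ∀ n, 0 < a n) (tstar : ℝ)
    (hconv : ∀ t, tstar < t → Summable (fun n => a n ^ t))
    (hdiv : ¬ Summable (fun n => a n ^ tstar)) :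
    ∃ ε : ℕ → ℝ, (∀ n, 0 < ε n) ∧ Tendsto ε atTop (𝓝 0) ∧
      Summable (fun n => a n ^ (tstar + ε n)) := by
  classical
  set h : ℕ → ℕ → ℝ := fun j n => a n ^ (tstar + 1 / ((j : ℝ) + 1)) with hh
  have hpos : ∀ j n, 0 < h j n := fun j n => Real.rpow_pos_of_pos (ha n) _
  have hexp : ∀ j : ℕ, tstar < tstar + 1 / ((j : ℝ) + 1) := by
    intro j
    have : (0:ℝ) < 1 / ((j : ℝ) + 1) := by positivity
    linarith
  have hsum : ∀ j, Summable (h j) := fun j => hconv _ (hexp j)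
  set c : ℝ := 1 + ∑' n, h 0 n with hc
  have htsum0 : (0:ℝ) ≤ ∑' n, h 0 n := tsum_nonneg fun n => (hpos 0 n).le
  have hc1 : (1:ℝ) ≤ c := by simp only [hc]; linarith
  -- choose tail cutoffs
  have hNex : ∀ j : ℕ, ∃ N : ℕ, ∑' n, h j (n + N) ≤ c * (1/2) ^ j := by
    intro j
    have ht := tendsto_sum_nat_add (h j)
    have hcpos : (0:ℝ) < c * (1/2) ^ j := by positivity
    have := (ht.eventually (gt_mem_nhds hcpos)).exists
    obtain ⟨N, hN⟩ := this
    exact ⟨N, hN.le⟩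
  set N : ℕ → ℕ := fun j => if j = 0 then 0 else Classical.choose (hNex j) with hNdef
  have hNtail : ∀ j, ∑' n, h j (n + N j) ≤ c * (1/2) ^ j := by
    intro j
    rcases Nat.eq_zero_or_pos j with hj | hj
    · subst hj
      simp only [hNdef, if_pos rfl]
      simp only [Nat.add_zero, pow_zero, mul_one]
      linarith
    · have : N j = Classical.choose (hNex j) := by
        simp [hNdef, Nat.pos_iff_ne_zero.mp hj]
      rw [this]
      exact Classical.choose_spec (hNex j)
  have hN0 : N 0 = 0 := by simp [hNdef]
  set k : ℕ → ℕ := fun n => Nat.findGreatest (fun j => N j ≤ n) n with hk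
  have hkN : ∀ n, N (k n) ≤ n := fun n =>
    Nat.findGreatest_spec (P := fun j => N j ≤ n) (Nat.zero_le n) (by simp [hN0])
  have hk_le : ∀ n, k n ≤ n := fun n => Nat.findGreatest_le n
  have hk_atTop : Tendsto k atTop atTop := by
    refine tendsto_atTop_atTop.2 fun b => ⟨max b (N b), fun n hn => ?_⟩
    exact Nat.le_findGreatest (le_trans (le_max_left _ _) hn)
      (le_trans (le_max_right _ _) hn)
  refine ⟨fun n => 1 / ((k n : ℝ) + 1), fun n => by positivity, ?_, ?_⟩
  · exact tendsto_one_div_add_atTop_nhds_zero_nat.comp hk_atTop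
  · -- summability via bounded partial sums
    have hfpos : ∀ n, 0 < a n ^ (tstar + 1 / ((k n : ℝ) + 1)) := fun n =>
      Real.rpow_pos_of_pos (ha n) _
    refine summable_of_sum_range_le (c := 2 * c) (fun n => (hfpos n).le) fun M => ?_
    have hmaps : ∀ n ∈ range M, k n ∈ range M := fun n hn =>
      mem_range.mpr (lt_of_le_of_lt (hk_le n) (mem_range.mp hn))
    rw [← Finset.sum_fiberwise_of_maps_to hmaps
      (fun n => a n ^ (tstar + 1 / ((k n : ℝ) + 1)))]
    have hblock : ∀ j ∈ range M,
        ∑ n ∈ (range M).filter (fun n => k n = j),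
          a n ^ (tstar + 1 / ((k n : ℝ) + 1)) ≤ c * (1/2) ^ j := by
      intro j _
      set s := (range M).filter (fun n => k n = j) with hs
      have hmem : ∀ n ∈ s, k n = j ∧ N j ≤ n := by
        intro n hn
        have hkn : k n = j := (mem_filter.mp hn).2
        exact ⟨hkn, hkn ▸ hkN n⟩
      have heq : ∑ n ∈ s, a n ^ (tstar + 1 / ((k n : ℝ) + 1)) = ∑ n ∈ s, h j n := by
        refine Finset.sum_congr rfl fun n hn => ?_
        rw [(hmem n hn).1]
      rw [heq]
      have himg : ∑ n ∈ s, h j n = ∑ m ∈ s.image (· - N j), h j (m + N j) := by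
        rw [Finset.sum_image (fun x hx y hy hxy => by
          have hx' := (hmem x hx).2
          have hy' := (hmem y hy).2
          omega)]
        refine Finset.sum_congr rfl fun n hn => ?_
        rw [Nat.sub_add_cancel (hmem n hn).2]
      rw [himg]
      have hsum' : Summable (fun m => h j (m + N j)) :=
        (summable_nat_add_iff (N j)).2 (hsum j)
      calc ∑ m ∈ s.image (· - N j), h j (m + N j)
          ≤ ∑' m, h j (m + N j) :=
            Summable.sum_le_tsum _ (fun m _ => (hpos j _).le) hsum'
        _ ≤ c * (1/2) ^ j := hNtail j
    calc ∑ j ∈ range M, ∑ n ∈ (range M).filter (fun n => k n = j),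
          a n ^ (tstar + 1 / ((k n : ℝ) + 1))
        ≤ ∑ j ∈ range M, c * (1/2) ^ j := Finset.sum_le_sum hblock
      _ = c * ∑ j ∈ range M, (1/2 : ℝ) ^ j := by rw [Finset.mul_sum]
      _ ≤ c * 2 := by
          have := sum_geometric_two_le M
          nlinarith
      _ = 2 * c := by ring
end

section
/- Let τ, Δ : Σ → ℝ be positive measurable functions, and suppose that for each r > 1 the set {x : τ(x) ≤ r} is contained in a set on which Δ ≥ G(r) for some G(r) > 0. Let (μ_n) be probability measures with (∫ Δ dμ_n)/(∫ τ dμ_n) → 0. Then ∫ τ dμ_n → ∞. -/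
open Filter Topology MeasureTheory

theorem stmt_11 {Ω : Type*} [MeasurableSpace Ω] (τ Δ : Ω → ℝ)
    (hτpos : ∀ x, 0 < τ x) (hΔpos : ∀ x, 0 < Δ x)
    (hτmeas : Measurable τ) (hΔmeas : Measurable Δ)
    (hG : ∀ r : ℝ, 1 < r → ∃ G : ℝ, 0 < G ∧ ∀ x, τ x ≤ r → G ≤ Δ x)
    (μ : ℕ → Measure Ω) (hprob : ∀ n, IsProbabilityMeasure (μ n))
    (hintτ : ∀ n, Integrable τ (μ n)) (hintΔ : ∀ n, Integrable Δ (μ n))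
    (hlim : Tendsto (fun n => (∫ x, Δ x ∂(μ n)) / (∫ x, τ x ∂(μ n))) atTop (𝓝 0)) :
    Tendsto (fun n => ∫ x, τ x ∂(μ n)) atTop atTop := by
  rw [tendsto_atTop]
  intro M
  set r : ℝ := 2 * max M 1 with hr
  have hmax1 : (1:ℝ) ≤ max M 1 := le_max_right M 1
  have hmaxM : M ≤ max M 1 := le_max_left M 1
  have hr1 : 1 < r := by simp only [hr]; nlinarith
  have hrpos : 0 < r := by linarith
  obtain ⟨G, hGpos, hGle⟩ := hG r hr1
  have hGr : 0 < G / r := div_pos hGpos hrpos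
  have hev := hlim.eventually (gt_mem_nhds hGr)
  filter_upwards [hev] with n hn
  by_contra hM
  push_neg at hM
  have hprobn := hprob n
  have hIpos : 0 < ∫ x, τ x ∂ μ n := by
    rw [integral_pos_iff_support_of_nonneg (fun x => (hτpos x).le) (hintτ n)]
    have hsupp : Function.support τ = Set.univ := by
      ext x; simp [Function.support, (hτpos x).ne']
    rw [hsupp]; simp
  set I : ℝ := ∫ x, τ x ∂ μ n with hI
  have hIlt : I < r / 2 := by
    have : M ≤ r / 2 := by simp only [hr]; linarith
    linarith
  -- Markov inequality
  have hmarkov : r * (μ n {x | r ≤ τ x}).toReal ≤ I :=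
    mul_meas_ge_le_integral_of_nonneg (ae_of_all _ fun x => (hτpos x).le) (hintτ n) r
  have hmle : (μ n {x | r ≤ τ x}).toReal ≤ I / r := by
    rw [le_div_iff₀ hrpos]; linarith
  set s : Set Ω := {x | τ x ≤ r} with hs
  have hsmeas : MeasurableSet s := measurableSet_le hτmeas measurable_const
  have hsum : (μ n s).toReal + (μ n sᶜ).toReal = 1 := by
    have h := prob_add_prob_compl (μ := μ n) hsmeas
    rw [← ENNReal.toReal_add (measure_ne_top _ _) (measure_ne_top _ _), h]
    simp
  have hcompl : (μ n sᶜ).toReal ≤ (μ n {x | r ≤ τ x}).toReal := by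
    apply ENNReal.toReal_mono (measure_ne_top _ _)
    apply measure_mono
    intro x hx
    simp only [hs, Set.mem_compl_iff, Set.mem_setOf_eq, not_le] at hx
    exact le_of_lt hx
  have hslb : 1 / 2 < (μ n s).toReal := by
    have hIr : I / r < 1 / 2 := by
      rw [div_lt_div_iff₀ hrpos (by norm_num : (0:ℝ) < 2)]; linarith
    linarith
  -- lower bound on ∫ Δ
  have hsetineq : G * (μ n s).toReal ≤ ∫ x in s, Δ x ∂ μ n := by
    apply setIntegral_ge_of_const_le_real hsmeas (measure_ne_top _ _)
    · intro x hx; exact hGle x hx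
    · exact (hintΔ n).integrableOn
  have hsetle : ∫ x in s, Δ x ∂ μ n ≤ ∫ x, Δ x ∂ μ n :=
    setIntegral_le_integral (hintΔ n) (ae_of_all _ fun x => (hΔpos x).le)
  have hΔlb : G / 2 < ∫ x, Δ x ∂ μ n := by
    have : G * (1/2) < G * (μ n s).toReal := by
      apply mul_lt_mul_of_pos_left hslb hGpos
    nlinarith
  -- derive contradiction
  have hratio : (∫ x, Δ x ∂ μ n) < G / r * I := (div_lt_iff₀ hIpos).mp hn
  have : G / r * I < G / 2 := by
    have h1 : G / r * I < G / r * (r / 2) := by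
      apply mul_lt_mul_of_pos_left hIlt hGr
    have h2 : G / r * (r / 2) = G / 2 := by
      field_simp
    linarith
  linarith
end
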